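/- Let λ > 0, T > 0 and let r₁ < 0 < r₂ be real numbers. Set C = (r₂ − 1)/(1 − r₁) and define y(t) = ( r₂ + r₁ C e^{(t−T)λ(r₂−r₁)} ) / ( 1 + C e^{(t−T)λ(r₂−r₁)} ) for t ∈ [0,T]. Then the denominator 1 + C e^{(t−T)λ(r₂−r₁)} is strictly positive on [0,T], y is differentiable, y(T) = 1, and y satisfies the Riccati equation y'(t) = λ ( y(t) − r₁ )( y(t) − r₂ ) = λ ( y(t)² − a y(t) − b ) on [0,T], where a = r₁ + r₂ and b = −r₁ r₂. -/

import Mathlib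

/-- The explicit solution of the Riccati equation `y' = λ(y² − a y − b)` with the
terminal condition `y(T) = 1`. -/
theorem stmt_5 (lam T : ℝ) (hlam : 0 < lam) (hT : 0 < T)
    (r₁ r₂ : ℝ) (hr₁ : r₁ < 0) (hr₂ : 0 < r₂)
    (C : ℝ) (hC : C = (r₂ - 1) / (1 - r₁))
    (y : ℝ → ℝ)
    (hy : ∀ t, y t = (r₂ + r₁ * C * Real.exp ((t - T) * lam * (r₂ - r₁))) /
      (1 + C * Real.exp ((t - T) * lam * (r₂ - r₁))))
    (a b : ℝ) (ha : a = r₁ + r₂) (hb : b = -(r₁ * r₂)) :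
    (∀ t ∈ Set.Icc (0 : ℝ) T, 0 < 1 + C * Real.exp ((t - T) * lam * (r₂ - r₁))) ∧
    y T = 1 ∧
    (∀ t ∈ Set.Icc (0 : ℝ) T,
      HasDerivAt y (lam * (y t - r₁) * (y t - r₂)) t ∧
      lam * (y t - r₁) * (y t - r₂) = lam * ((y t) ^ 2 - a * y t - b)) := by
  have h1r₁ : (0:ℝ) < 1 - r₁ := by linarith
  have hC1 : C * (1 - r₁) = r₂ - 1 := by
    rw [hC]; field_simp
  have hCneg1 : -1 < C := by nlinarith
  have hden : ∀ t ∈ Set.Icc (0 : ℝ) T,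
      0 < 1 + C * Real.exp ((t - T) * lam * (r₂ - r₁)) := by
    intro t ht
    have hE : Real.exp ((t - T) * lam * (r₂ - r₁)) ≤ 1 := by
      apply Real.exp_le_one_iff.mpr
      have h1 : (0:ℝ) ≤ (T - t) * lam * (r₂ - r₁) :=
        mul_nonneg (mul_nonneg (by linarith [ht.2]) hlam.le) (by linarith)
      nlinarith
    have hE0 : 0 < Real.exp ((t - T) * lam * (r₂ - r₁)) := Real.exp_pos _
    rcases le_or_gt 0 C with h | h
    · nlinarith
    · nlinarith
  have hyT : y T = 1 := by
    rw [hy T]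
    have : (T - T) * lam * (r₂ - r₁) = 0 := by ring
    rw [this, Real.exp_zero]
    rw [div_eq_one_iff_eq]
    · nlinarith
    · nlinarith
  refine ⟨hden, hyT, ?_⟩
  intro t ht
  set E : ℝ := Real.exp ((t - T) * lam * (r₂ - r₁)) with hE
  have hdent : 0 < 1 + C * E := hden t ht
  have hdne : 1 + C * E ≠ 0 := ne_of_gt hdent
  have hEderiv : HasDerivAt (fun s => Real.exp ((s - T) * lam * (r₂ - r₁)))
      (E * (lam * (r₂ - r₁))) t := by
    have hinner : HasDerivAt (fun s => (s - T) * lam * (r₂ - r₁))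
        (1 * lam * (r₂ - r₁)) t := by
      exact (((hasDerivAt_id t).sub_const T).mul_const lam).mul_const (r₂ - r₁)
    have := hinner.exp
    simpa [hE, mul_comm, mul_assoc, mul_left_comm] using this
  have hnum : HasDerivAt (fun s => r₂ + r₁ * C * Real.exp ((s - T) * lam * (r₂ - r₁)))
      (r₁ * C * (E * (lam * (r₂ - r₁)))) t :=
    (hEderiv.const_mul (r₁ * C)).const_add r₂
  have hdenD : HasDerivAt (fun s => 1 + C * Real.exp ((s - T) * lam * (r₂ - r₁)))
      (C * (E * (lam * (r₂ - r₁)))) t :=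
    (hEderiv.const_mul C).const_add 1
  have hyderiv : HasDerivAt y
      ((r₁ * C * (E * (lam * (r₂ - r₁))) * (1 + C * E)
        - (r₂ + r₁ * C * E) * (C * (E * (lam * (r₂ - r₁))))) / (1 + C * E) ^ 2) t := by
    have := hnum.div hdenD hdne
    have heq : y = fun s => (r₂ + r₁ * C * Real.exp ((s - T) * lam * (r₂ - r₁))) /
        (1 + C * Real.exp ((s - T) * lam * (r₂ - r₁))) := funext hy
    rw [heq]
    exact this
  have hval : (r₁ * C * (E * (lam * (r₂ - r₁))) * (1 + C * E)
        - (r₂ + r₁ * C * E) * (C * (E * (lam * (r₂ - r₁))))) / (1 + C * E) ^ 2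
      = lam * (y t - r₁) * (y t - r₂) := by
    rw [hy t, ← hE]
    field_simp
    ring
  constructor
  · rw [← hval]; exact hyderiv
  · rw [ha, hb]; ring
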